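/- Let φ : (0,∞) → ℝ be a differentiable function and let U ∈ U(N) be a unitary matrix with all entries nonzero. Define W ∈ M_N(ℂ) by W_{ij} = sgn(U_{ij})·φ'(|U_{ij}|). Then the derivative at t = 0 of the function t ↦ Σ_{i,j} φ(|(U·exp(tA))_{ij}|) vanishes for every anti-hermitian matrix A ∈ M_N(ℂ) (A* = −A) if and only if the matrix W·U* is self-adjoint. -/

import Mathlib

open scoped ComplexConjugate Matrix

noncomputable def csgn (z : ℂ) : ℂ := z / (‖z‖ : ℂ)

section aux

variable {N : ℕ}

/-- entry evaluation as a linear map -/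
def entryLM (i j : Fin N) : Matrix (Fin N) (Fin N) ℂ →ₗ[ℝ] ℂ where
  toFun M := M i j
  map_add' _ _ := rfl
  map_smul' _ _ := rfl

lemma entry_hasDerivAt (U A : Matrix (Fin N) (Fin N) ℂ) (i j : Fin N) :
    HasDerivAt (fun t : ℝ => (U * NormedSpace.exp (t • A)) i j) ((U * A) i j) 0 := by
  letI : NormedRing (Matrix (Fin N) (Fin N) ℂ) := Matrix.linftyOpNormedRing
  letI : NormedAlgebra ℝ (Matrix (Fin N) (Fin N) ℂ) := Matrix.linftyOpNormedAlgebra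
  have h1 : HasDerivAt (fun t : ℝ => NormedSpace.exp (t • A)) A 0 := by
    have := hasDerivAt_exp_smul_const (𝕂 := ℝ) A 0
    simp only [zero_smul, NormedSpace.exp_zero, one_mul] at this
    exact this
  have h2 : HasDerivAt (fun t : ℝ => U * NormedSpace.exp (t • A)) (U * A) 0 :=
    h1.const_mul U
  have hL : HasFDerivAt (entryLM i j) ((entryLM i j).toContinuousLinearMap : _ →L[ℝ] ℂ) (U * NormedSpace.exp ((0:ℝ) • A)) :=
    ((entryLM i j).toContinuousLinearMap).hasFDerivAt
  exact hL.comp_hasDerivAt 0 h2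

lemma abs_comp_hasDerivAt {g : ℝ → ℂ} {z w : ℂ} (hg : HasDerivAt g w 0) (h0 : g 0 = z)
    (hz : z ≠ 0) :
    HasDerivAt (fun t => ‖g t‖)
      ((z.re * w.re + z.im * w.im) / ‖z‖) 0 := by
  have hre : HasDerivAt (fun t => (g t).re) w.re 0 := by
    exact (Complex.reCLM.hasFDerivAt.comp_hasDerivAt 0 hg)
  have him : HasDerivAt (fun t => (g t).im) w.im 0 := by
    exact (Complex.imCLM.hasFDerivAt.comp_hasDerivAt 0 hg)
  have hsq : HasDerivAt (fun t => (g t).re * (g t).re + (g t).im * (g t).im)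
      ((w.re * z.re + z.re * w.re) + (w.im * z.im + z.im * w.im)) 0 := by
    have := (hre.mul hre).add (him.mul him)
    simp only [h0] at this
    exact this
  have hpos : (0:ℝ) < z.re * z.re + z.im * z.im := by
    have := Complex.normSq_pos.2 hz
    simpa [Complex.normSq_apply] using this
  have hsqrt : HasDerivAt Real.sqrt (1 / (2 * Real.sqrt (z.re * z.re + z.im * z.im)))
      (z.re * z.re + z.im * z.im) := Real.hasDerivAt_sqrt hpos.ne'
  have hsqrt' : HasDerivAt Real.sqrt (1 / (2 * Real.sqrt (z.re * z.re + z.im * z.im)))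
      ((g 0).re * (g 0).re + (g 0).im * (g 0).im) := by rw [h0]; exact hsqrt
  have hcomp := hsqrt'.comp 0 hsq
  have habs : ‖z‖ = Real.sqrt (z.re * z.re + z.im * z.im) := by
    rw [Complex.norm_def, Complex.normSq_apply]
  have hfun : (fun t => ‖g t‖)
      = fun t => Real.sqrt ((g t).re * (g t).re + (g t).im * (g t).im) := by
    funext t; rw [Complex.norm_def, Complex.normSq_apply]
  rw [hfun]
  refine hcomp.congr_deriv ?_
  have hane : Real.sqrt (z.re * z.re + z.im * z.im) ≠ 0 := by
    rw [← habs]; simpa using hz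
  rw [habs]
  field_simp
  ring

end aux

section aux2

variable {N : ℕ}

lemma term_eq (z w : ℂ) (hz : z ≠ 0) (c : ℝ) :
    c * ((z.re * w.re + z.im * w.im) / ‖z‖)
      = ((starRingEnd ℂ) (csgn z * (c : ℂ)) * w).re := by
  have ha : (‖z‖ : ℝ) ≠ 0 := by simpa using hz
  have h1 : (starRingEnd ℂ) (csgn z * (c : ℂ)) * w
      = ((starRingEnd ℂ) z * (c : ℂ) * w) / (‖z‖ : ℂ) := by
    simp only [csgn, map_mul, map_div₀, Complex.conj_ofReal]
    ring
  rw [h1, Complex.div_ofReal_re]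
  have h2 : ((starRingEnd ℂ) z * (c : ℂ) * w).re
      = c * (z.re * w.re + z.im * w.im) := by
    simp [Complex.mul_re, Complex.mul_im]
    ring
  rw [h2]
  field_simp

lemma full_hasDerivAt (φ : ℝ → ℝ) (hφ : ∀ x > (0 : ℝ), DifferentiableAt ℝ φ x)
    (U : Matrix (Fin N) (Fin N) ℂ) (hne : ∀ i j, U i j ≠ 0)
    (A : Matrix (Fin N) (Fin N) ℂ) :
    HasDerivAt
      (fun t : ℝ => ∑ i, ∑ j, φ (‖(U * NormedSpace.exp (t • A)) i j‖))
      (∑ i, ∑ j, ((starRingEnd ℂ)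
        (csgn (U i j) * ((deriv φ (‖U i j‖) : ℝ) : ℂ)) * (U * A) i j).re) 0 := by
  apply HasDerivAt.fun_sum
  intro i _
  apply HasDerivAt.fun_sum
  intro j _
  have hz := hne i j
  have h0 : (U * NormedSpace.exp ((0:ℝ) • A)) i j = U i j := by
    simp [NormedSpace.exp_zero]
  have habs := abs_comp_hasDerivAt (entry_hasDerivAt U A i j) h0 hz
  have hpos : (0:ℝ) < ‖U i j‖ := by simpa using hz
  have hφ' : HasDerivAt φ (deriv φ (‖U i j‖)) (‖U i j‖) :=
    (hφ _ hpos).hasDerivAt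
  have hφ'' : HasDerivAt φ (deriv φ (‖U i j‖))
      ((fun t : ℝ => ‖(U * NormedSpace.exp (t • A)) i j‖) 0) := by
    simpa [h0] using hφ'
  have := hφ''.comp 0 habs
  rw [← term_eq (U i j) ((U * A) i j) hz (deriv φ (‖U i j‖))]
  exact this

end aux2

section aux3

variable {N : ℕ}

lemma alg (U Wm : Matrix (Fin N) (Fin N) ℂ) (h1 : Uᴴ * U = 1) (h2 : U * Uᴴ = 1) :
    (∀ A : Matrix (Fin N) (Fin N) ℂ, Aᴴ = -A → ((Wmᴴ * U * A).trace).re = 0) ↔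
      (Wm * Uᴴ).IsHermitian := by
  obtain ⟨M, hM⟩ : ∃ M, M = Wmᴴ * U := ⟨_, rfl⟩
  have hMH : Mᴴ = Uᴴ * Wm := by
    rw [hM, Matrix.conjTranspose_mul, Matrix.conjTranspose_conjTranspose]
  constructor
  · intro h
    rw [show (∀ A : Matrix (Fin N) (Fin N) ℂ, Aᴴ = -A → ((Wmᴴ * U * A).trace).re = 0)
        = (∀ A : Matrix (Fin N) (Fin N) ℂ, Aᴴ = -A → ((M * A).trace).re = 0) by rw [hM]] at h
    obtain ⟨B, hBdef⟩ : ∃ B, B = M - Mᴴ := ⟨_, rfl⟩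
    have hB : Bᴴ = -B := by
      rw [hBdef, Matrix.conjTranspose_sub, Matrix.conjTranspose_conjTranspose, neg_sub]
    have hMB : ((M * B).trace).re = 0 := h B hB
    have t1 : (Mᴴ * B).trace = -star ((M * B).trace) := by
      have e1 : Mᴴ * B = (Bᴴ * M)ᴴ := by
        rw [Matrix.conjTranspose_mul, Matrix.conjTranspose_conjTranspose]
      rw [e1, Matrix.trace_conjTranspose, hB, Matrix.neg_mul, Matrix.trace_neg,
        Matrix.trace_mul_comm]
      simp
    have hBB : ((B * B).trace).re = 0 := by
      have e : B * B = M * B - Mᴴ * B := by rw [hBdef, Matrix.sub_mul]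
      rw [e, Matrix.trace_sub, Complex.sub_re, hMB, t1]
      simp [hMB]
    have hBB' : ((Bᴴ * B).trace).re = 0 := by
      have e : Bᴴ * B = -(B * B) := by rw [hB, Matrix.neg_mul]
      rw [e, Matrix.trace_neg, Complex.neg_re, hBB, neg_zero]
    have e2 : ((Bᴴ * B).trace).re = ∑ k, ∑ i, Complex.normSq (B i k) := by
      rw [Matrix.trace]
      rw [Complex.re_sum]
      congr 1; funext k
      rw [Matrix.diag_apply, Matrix.mul_apply, Complex.re_sum]
      congr 1; funext i
      rw [Matrix.conjTranspose_apply, ← starRingEnd_apply,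
        ← Complex.normSq_eq_conj_mul_self, Complex.ofReal_re]
    have hzero : ∀ k i, B i k = 0 := by
      intro k i
      have hsum : ∑ k, ∑ i, Complex.normSq (B i k) = 0 := by rw [← e2, hBB']
      have h1' : ∀ k ∈ Finset.univ, (0:ℝ) ≤ ∑ i, Complex.normSq (B i k) :=
        fun k _ => Finset.sum_nonneg fun i _ => Complex.normSq_nonneg _
      have h2' := (Finset.sum_eq_zero_iff_of_nonneg h1').1 hsum k (Finset.mem_univ k)
      have h3' := (Finset.sum_eq_zero_iff_of_nonneg
        (fun i _ => Complex.normSq_nonneg (B i k))).1 h2' i (Finset.mem_univ i)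
      exact Complex.normSq_eq_zero.1 h3'
    have hB0 : B = 0 := by
      ext i j; exact hzero j i
    have hMherm : Mᴴ = M := by
      have : M - Mᴴ = 0 := hBdef ▸ hB0
      exact (sub_eq_zero.1 this).symm
    show (Wm * Uᴴ)ᴴ = Wm * Uᴴ
    have hWU : Uᴴ * Wm = Wmᴴ * U := by rw [← hMH, hMherm, hM]

    calc (Wm * Uᴴ)ᴴ = U * Wmᴴ := by
          rw [Matrix.conjTranspose_mul, Matrix.conjTranspose_conjTranspose]
      _ = U * (Wmᴴ * (U * Uᴴ)) := by rw [h2, mul_one]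
      _ = U * (Wmᴴ * U) * Uᴴ := by rw [← mul_assoc, ← mul_assoc, mul_assoc U Wmᴴ U]
      _ = U * (Uᴴ * Wm) * Uᴴ := by rw [hWU]
      _ = (U * Uᴴ) * (Wm * Uᴴ) := by rw [← mul_assoc, mul_assoc (U * Uᴴ) Wm Uᴴ]
      _ = Wm * Uᴴ := by rw [h2, one_mul]
  · intro hH A hA
    have hH' : U * Wmᴴ = Wm * Uᴴ := by
      have := hH
      rwa [Matrix.IsHermitian, Matrix.conjTranspose_mul,
        Matrix.conjTranspose_conjTranspose] at this
    have hMherm : Mᴴ = M := by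
      rw [hMH, hM]
      calc Uᴴ * Wm = Uᴴ * (Wm * (Uᴴ * U)) := by rw [h1, mul_one]
        _ = Uᴴ * (Wm * Uᴴ) * U := by rw [← mul_assoc, ← mul_assoc, mul_assoc Uᴴ Wm Uᴴ]
        _ = Uᴴ * (U * Wmᴴ) * U := by rw [hH']
        _ = (Uᴴ * U) * (Wmᴴ * U) := by rw [← mul_assoc, mul_assoc (Uᴴ * U) Wmᴴ U]
        _ = Wmᴴ * U := by rw [h1, one_mul]
    have e : star ((M * A).trace) = -((M * A).trace) := by
      calc star ((M * A).trace) = ((M * A)ᴴ).trace := (Matrix.trace_conjTranspose _).symm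
        _ = (Aᴴ * Mᴴ).trace := by rw [Matrix.conjTranspose_mul]
        _ = ((-A) * M).trace := by rw [hA, hMherm]
        _ = -((A * M).trace) := by rw [Matrix.neg_mul, Matrix.trace_neg]
        _ = -((M * A).trace) := by rw [Matrix.trace_mul_comm]
    rw [← hM]
    have hre := congrArg Complex.re e
    rw [← starRingEnd_apply, Complex.conj_re, Complex.neg_re] at hre
    linarith [hre]

end aux3

/-- For a differentiable `φ : (0,∞) → ℝ` and `U ∈ U(N)` with nonzero
entries, setting `W_{ij} = sgn(U_{ij}) φ'(|U_{ij}|)`, the derivative at `t = 0` of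
`t ↦ ∑_{i,j} φ(|(U·exp(tA))_{ij}|)` vanishes for every anti-hermitian `A` iff
`W·U*` is self-adjoint. -/
theorem stmt2 (N : ℕ) (φ : ℝ → ℝ) (hφ : ∀ x > (0 : ℝ), DifferentiableAt ℝ φ x)
    (U : Matrix (Fin N) (Fin N) ℂ) (hU : U ∈ Matrix.unitaryGroup (Fin N) ℂ)
    (hne : ∀ i j, U i j ≠ 0)
    (W : Matrix (Fin N) (Fin N) ℂ)
    (hW : W = Matrix.of fun i j => csgn (U i j) * deriv φ (‖U i j‖)) :
    (∀ A : Matrix (Fin N) (Fin N) ℂ, Aᴴ = -A →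
      HasDerivAt
        (fun t : ℝ => ∑ i, ∑ j,
          φ (‖(U * NormedSpace.exp (t • A)) i j‖))
        0 0) ↔
    (W * Uᴴ).IsHermitian := by
  have h1 : Uᴴ * U = 1 := by
    have := hU.1; rwa [Matrix.star_eq_conjTranspose] at this
  have h2 : U * Uᴴ = 1 := by
    have := hU.2; rwa [Matrix.star_eq_conjTranspose] at this
  have key : ∀ A : Matrix (Fin N) (Fin N) ℂ,
      HasDerivAt
        (fun t : ℝ => ∑ i, ∑ j,
          φ (‖(U * NormedSpace.exp (t • A)) i j‖))
        (((Wᴴ * U * A).trace).re) 0 := by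
    intro A
    have h := full_hasDerivAt φ hφ U hne A
    have hval : (∑ i, ∑ j, ((starRingEnd ℂ)
          (csgn (U i j) * ((deriv φ (‖U i j‖) : ℝ) : ℂ)) * (U * A) i j).re)
        = ((Wᴴ * U * A).trace).re := by
      rw [mul_assoc, Matrix.trace, Complex.re_sum, Finset.sum_comm]
      congr 1; funext k
      rw [Matrix.diag_apply, Matrix.mul_apply, Complex.re_sum]
      congr 1; funext i
      rw [Matrix.conjTranspose_apply, hW, Matrix.of_apply, ← starRingEnd_apply]
    rwa [hval] at h
  constructor
  · intro hL
    apply (alg U W h1 h2).1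
    intro A hA
    exact ((key A).unique (hL A hA))
  · intro hH A hA
    have h0 := (alg U W h1 h2).2 hH A hA
    have := key A
    rwa [h0] at this
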